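/- Let V be a 2m-dimensional real inner product space with compatible complex structure J (m ≥ 3), and let R be a Kähler-type algebraic curvature tensor on V with vanishing Bochner tensor. If R(x, Jx, y, z) = 0 for all unit vectors x, y, z spanning an antiholomorphic 3-plane, then the Ricci tensor S of R satisfies S(y, z) = 0 whenever g(y,z) = g(y,Jz) = 0. -/

import Mathlib

open scoped RealInnerProductSpace

/-- A compatible (orthogonal) complex structure on a real inner product space. -/
def IsComplexStructure {V : Type*} [NormedAddCommGroup V] [InnerProductSpace ℝ V]
    (J : V →ₗ[ℝ] V) : Prop :=
  (∀ x, J (J x) = -x) ∧ ∀ x y : V, ⟪J x, J y⟫ = ⟪x, y⟫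

/-- A (0,4) curvature-type tensor. -/
abbrev CurvTensor (V : Type*) [NormedAddCommGroup V] [InnerProductSpace ℝ V] :=
  V →ₗ[ℝ] V →ₗ[ℝ] V →ₗ[ℝ] V →ₗ[ℝ] ℝ

/-- An algebraic curvature tensor of Kähler type. -/
structure IsKahlerCurv {V : Type*} [NormedAddCommGroup V] [InnerProductSpace ℝ V]
    (J : V →ₗ[ℝ] V) (R : CurvTensor V) : Prop where
  skew₁ : ∀ x y z u, R x y z u = - R y x z u
  skew₂ : ∀ x y z u, R x y z u = - R x y u z
  symm : ∀ x y z u, R x y z u = R z u x y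
  bianchi : ∀ x y z u, R x y z u + R y z x u + R z x y u = 0
  kahler : ∀ x y z u, R x y z u = R x y (J z) (J u)

/-- The Ricci tensor of an algebraic curvature tensor. -/
noncomputable def ricciT {V : Type*} [NormedAddCommGroup V] [InnerProductSpace ℝ V]
    [FiniteDimensional ℝ V] (R : CurvTensor V) (y z : V) : ℝ :=
  ∑ i, R (stdOrthonormalBasis ℝ V i) y z (stdOrthonormalBasis ℝ V i)

/-- The scalar curvature of an algebraic curvature tensor. -/
noncomputable def scalarT {V : Type*} [NormedAddCommGroup V] [InnerProductSpace ℝ V]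
    [FiniteDimensional ℝ V] (R : CurvTensor V) : ℝ :=
  ∑ i, ricciT R (stdOrthonormalBasis ℝ V i) (stdOrthonormalBasis ℝ V i)

/-- The Bochner curvature tensor of a Kähler-type curvature tensor
(`2 * m` is the dimension). -/
noncomputable def bochnerT {V : Type*} [NormedAddCommGroup V] [InnerProductSpace ℝ V]
    [FiniteDimensional ℝ V] (m : ℕ) (J : V →ₗ[ℝ] V) (R : CurvTensor V)
    (x y z u : V) : ℝ :=
  R x y z u
  - (1 / (2 * ((m : ℝ) + 2))) *
      ( ⟪x, u⟫ * ricciT R y z - ⟪x, z⟫ * ricciT R y u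
      + ⟪y, z⟫ * ricciT R x u - ⟪y, u⟫ * ricciT R x z
      + ⟪x, J u⟫ * ricciT R y (J z) - ⟪x, J z⟫ * ricciT R y (J u)
      + ⟪y, J z⟫ * ricciT R x (J u) - ⟪y, J u⟫ * ricciT R x (J z)
      - 2 * ⟪x, J y⟫ * ricciT R z (J u) - 2 * ⟪z, J u⟫ * ricciT R x (J y) )
  + (scalarT R / (4 * ((m : ℝ) + 1) * ((m : ℝ) + 2))) *
      ( ⟪x, u⟫ * ⟪y, z⟫ - ⟪x, z⟫ * ⟪y, u⟫
      + ⟪x, J u⟫ * ⟪y, J z⟫ - ⟪x, J z⟫ * ⟪y, J u⟫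
      - 2 * ⟪x, J y⟫ * ⟪z, J u⟫ )

/-- `x, Jx, y, Jy, z, Jz` are pairwise orthogonal, i.e. `x, y, z` span an
antiholomorphic 3-plane. -/
def AntiholoTriple {V : Type*} [NormedAddCommGroup V] [InnerProductSpace ℝ V]
    (J : V →ₗ[ℝ] V) (x y z : V) : Prop :=
  ⟪x, y⟫ = 0 ∧ ⟪x, z⟫ = 0 ∧ ⟪y, z⟫ = 0 ∧
  ⟪x, J x⟫ = 0 ∧ ⟪y, J y⟫ = 0 ∧ ⟪z, J z⟫ = 0 ∧
  ⟪x, J y⟫ = 0 ∧ ⟪x, J z⟫ = 0 ∧ ⟪y, J z⟫ = 0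

/-- A `J`-adapted orthonormal family `{e i, J (e i)}`. -/
def IsAdaptedBasis {V : Type*} [NormedAddCommGroup V] [InnerProductSpace ℝ V]
    (J : V →ₗ[ℝ] V) {m : ℕ} (e : Fin m → V) : Prop :=
  (∀ i j, ⟪e i, e j⟫ = if i = j then 1 else 0) ∧ ∀ i j, ⟪e i, J (e j)⟫ = 0



section Aux
variable {V : Type*} [NormedAddCommGroup V] [InnerProductSpace ℝ V]

lemma JSkew {J : V →ₗ[ℝ] V} (hJ : IsComplexStructure J) (a b : V) :
    ⟪J a, b⟫ = -⟪a, J b⟫ := by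
  have h : ⟪J a, J (J b)⟫ = ⟪a, J b⟫ := hJ.2 a (J b)
  rw [hJ.1, inner_neg_right] at h
  linarith

lemma JSelf {J : V →ₗ[ℝ] V} (hJ : IsComplexStructure J) (a : V) :
    ⟪a, J a⟫ = 0 := by
  have h := JSkew hJ a a
  rw [real_inner_comm] at h
  linarith

lemma JNorm {J : V →ₗ[ℝ] V} (hJ : IsComplexStructure J) (a : V) :
    ‖J a‖ = ‖a‖ := by
  have h : ⟪J a, J a⟫ = ⟪a, a⟫ := hJ.2 a a
  rw [real_inner_self_eq_norm_mul_norm, real_inner_self_eq_norm_mul_norm] at h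
  exact (mul_self_inj_of_nonneg (norm_nonneg _) (norm_nonneg _)).mp h

variable [FiniteDimensional ℝ V]

lemma ricciT_smul_left (R : CurvTensor V) (c : ℝ) (y z : V) :
    ricciT R (c • y) z = c * ricciT R y z := by
  simp [ricciT, Finset.mul_sum, map_smul]

lemma ricciT_smul_right (R : CurvTensor V) (c : ℝ) (y z : V) :
    ricciT R y (c • z) = c * ricciT R y z := by
  simp [ricciT, Finset.mul_sum, map_smul]

lemma exists_unit_orth (m : ℕ) (hm : 3 ≤ m) (hdim : Module.finrank ℝ V = 2 * m)
    (a b c d : V) :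
    ∃ x : V, ‖x‖ = 1 ∧ ⟪x, a⟫ = 0 ∧ ⟪x, b⟫ = 0 ∧ ⟪x, c⟫ = 0 ∧ ⟪x, d⟫ = 0 := by
  set W := Submodule.span ℝ (Set.range ![a, b, c, d]) with hWdef
  have hW4 : Module.finrank ℝ W ≤ 4 := by
    have h := finrank_range_le_card (R := ℝ) ![a, b, c, d]
    simpa only [Set.finrank, Fintype.card_fin] using h
  have horth : 0 < Module.finrank ℝ Wᗮ := by
    have := Submodule.finrank_add_finrank_orthogonal (K := W)
    omega
  obtain ⟨v, hv, hv0⟩ : ∃ v ∈ Wᗮ, v ≠ 0 := by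
    by_contra h
    push_neg at h
    have hbot : Wᗮ = ⊥ := by
      ext w; simp only [Submodule.mem_bot]
      constructor
      · intro hw; by_contra hne; exact hne (h w hw)
      · rintro rfl; exact Wᗮ.zero_mem
    rw [hbot] at horth; simp at horth
  have hvn : ‖v‖ ≠ 0 := norm_ne_zero_iff.mpr hv0
  refine ⟨‖v‖⁻¹ • v, ?_, ?_, ?_, ?_, ?_⟩
  · rw [norm_smul]; simp [hvn]
  all_goals rw [real_inner_smul_left]
  · have := hv a (Submodule.subset_span ⟨0, rfl⟩); rw [real_inner_comm] at this
    rw [this, mul_zero]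
  · have := hv b (Submodule.subset_span ⟨1, rfl⟩); rw [real_inner_comm] at this
    rw [this, mul_zero]
  · have := hv c (Submodule.subset_span ⟨2, rfl⟩); rw [real_inner_comm] at this
    rw [this, mul_zero]
  · have := hv d (Submodule.subset_span ⟨3, rfl⟩); rw [real_inner_comm] at this
    rw [this, mul_zero]

lemma key_ricci (m : ℕ) {J : V →ₗ[ℝ] V} (hJ : IsComplexStructure J)
    (R : CurvTensor V)
    (hB : ∀ x y z u, bochnerT m J R x y z u = 0)
    (x y z : V) (hx : ‖x‖ = 1)
    (ht : AntiholoTriple J x y z) (hr : R x (J x) y z = 0) :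
    ricciT R y (J z) = 0 := by
  obtain ⟨hxy, hxz, hyz, -, -, -, hxJy, hxJz, hyJz⟩ := ht
  have hb := hB x (J x) y z
  unfold bochnerT at hb
  have e1 : ⟪J x, y⟫ = 0 := by rw [JSkew hJ, hxJy, neg_zero]
  have e2 : ⟪J x, z⟫ = 0 := by rw [JSkew hJ, hxJz, neg_zero]
  have e3 : ⟪J x, J y⟫ = 0 := by rw [hJ.2, hxy]
  have e4 : ⟪J x, J z⟫ = 0 := by rw [hJ.2, hxz]
  have e5 : ⟪x, J (J x)⟫ = -1 := by
    rw [hJ.1, inner_neg_right, real_inner_self_eq_norm_mul_norm, hx]; norm_num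
  rw [hr, hxy, hxz, hyJz, hxJy, hxJz, e1, e2, e3, e4, e5] at hb
  have hm2 : (2 * ((m : ℝ) + 2)) ≠ 0 := by positivity
  field_simp at hb
  have hm1 : (0:ℝ) < (m:ℝ) + 1 := by positivity
  ring_nf at hb
  nlinarith

end Aux

/-- A Kähler-type algebraic curvature tensor with vanishing Bochner
tensor and `R(x,Jx,y,z) = 0` on antiholomorphic unit triples has `S(y,z) = 0`
whenever `g(y,z) = g(y,Jz) = 0`. -/
theorem ricci_vanishes_of_bochner_and_antiholo
    {V : Type*} [NormedAddCommGroup V] [InnerProductSpace ℝ V]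
    [FiniteDimensional ℝ V]
    (m : ℕ) (hm : 3 ≤ m) (hdim : Module.finrank ℝ V = 2 * m)
    (J : V →ₗ[ℝ] V) (hJ : IsComplexStructure J)
    (R : CurvTensor V) (hR : IsKahlerCurv J R)
    (hB : ∀ x y z u, bochnerT m J R x y z u = 0)
    (h0 : ∀ x y z : V, ‖x‖ = 1 → ‖y‖ = 1 → ‖z‖ = 1 → AntiholoTriple J x y z →
      R x (J x) y z = 0) :
    ∀ y z : V, ⟪y, z⟫ = 0 → ⟪y, J z⟫ = 0 → ricciT R y z = 0 := by
  intro y z hyz hyJz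
  by_cases hy0 : y = 0
  · simp [hy0, ricciT]
  by_cases hz0 : z = 0
  · simp [hz0, ricciT]
  have hyn : ‖y‖ ≠ 0 := norm_ne_zero_iff.mpr hy0
  have hzn : ‖z‖ ≠ 0 := norm_ne_zero_iff.mpr hz0
  set y₁ : V := ‖y‖⁻¹ • y with hy₁
  set z₁ : V := (-‖z‖⁻¹) • J z with hz₁
  have hny1 : ‖y₁‖ = 1 := by
    rw [hy₁, norm_smul]; simp [hyn]
  have hnz1 : ‖z₁‖ = 1 := by
    rw [hz₁, norm_smul, JNorm hJ]; simp [hzn]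
  have hJz1 : J z₁ = ‖z‖⁻¹ • z := by
    rw [hz₁, map_smul, hJ.1]
    simp
  obtain ⟨x, hx1, hxa, hxb, hxc, hxd⟩ := exists_unit_orth m hm hdim y (J y) z (J z)
  have ht : AntiholoTriple J x y₁ z₁ := by
    refine ⟨?_, ?_, ?_, JSelf hJ x, JSelf hJ y₁, JSelf hJ z₁, ?_, ?_, ?_⟩
    · rw [hy₁, real_inner_smul_right, hxa, mul_zero]
    · rw [hz₁, real_inner_smul_right, hxd, mul_zero]
    · rw [hy₁, hz₁, real_inner_smul_left, real_inner_smul_right, hyJz,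
        mul_zero, mul_zero]
    · rw [hy₁, map_smul, real_inner_smul_right, hxb, mul_zero]
    · rw [hJz1, real_inner_smul_right, hxc, mul_zero]
    · rw [hy₁, hJz1, real_inner_smul_left, real_inner_smul_right, hyz,
        mul_zero, mul_zero]
  have hr : R x (J x) y₁ z₁ = 0 := h0 x y₁ z₁ hx1 hny1 hnz1 ht
  have hk := key_ricci m hJ R hB x y₁ z₁ hx1 ht hr
  rw [hJz1, hy₁, ricciT_smul_left, ricciT_smul_right] at hk
  have h1 : ‖y‖⁻¹ ≠ 0 := inv_ne_zero hyn
  have h2 : ‖z‖⁻¹ ≠ 0 := inv_ne_zero hzn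
  field_simp at hk
  simpa using hk
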